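/- Let m > 2, s ∈ (0,1), and let p, q, r ∈ (1, ∞) satisfy 1/p = 1/q + 1/r. There exists a constant C > 0, depending only on m, such that for every measurable f : ℝ² → ℝ with f ∈ L^q(ℝ²) ∩ L^{r(m-2)}(ℝ²), writing F(y) = |f(y)|^{m-2} f(y), one has ∫_{ℝ²} ‖F(· + x) - F(·)‖_{L^p(ℝ²)}^p / |x|^{2 + s p} dx ≤ C^p ‖f‖_{L^{r(m-2)}(ℝ²)}^{(m-2)p} ∫_{ℝ²} ‖f(· + x) - f(·)‖_{L^q(ℝ²)}^p / |x|^{2 + s p} dx. -/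

import Mathlib

open MeasureTheory

lemma aux_bern {k a b : ℝ} (hk : 0 < k) (hb : 0 ≤ b) (hba : b ≤ a) :
    a ^ (k + 1) - b ^ (k + 1) ≤ (k + 1) * (a ^ k * (a - b)) := by
  rcases (hb.trans hba).eq_or_lt with h | ha
  · have hb0 : b = 0 := le_antisymm (h ▸ hba) hb
    simp [← h, hb0, Real.zero_rpow (by positivity : k + 1 ≠ 0)]
  · have hs : -1 ≤ (b - a) / a := by
      rw [le_div_iff₀ ha]; linarith
    have key := one_add_mul_self_le_rpow_one_add hs (p := k + 1) (by linarith)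
    have h1a : 1 + (b - a) / a = b / a := by field_simp; ring
    rw [h1a] at key
    have h2 := mul_le_mul_of_nonneg_left key (Real.rpow_pos_of_pos ha (k + 1)).le
    have h3 : a ^ (k + 1) * ((b / a) ^ (k + 1)) = b ^ (k + 1) := by
      rw [← Real.mul_rpow ha.le (by positivity)]
      congr 1; field_simp
    have h4 : a ^ (k + 1) * (1 + (k + 1) * ((b - a) / a)) =
        a ^ (k + 1) + (k + 1) * (a ^ k * (b - a)) := by
      rw [Real.rpow_add_one ha.ne']; field_simp
    rw [h3, h4] at h2
    linarith

lemma aux_mul_self {k : ℝ} (hk : 0 < k) {c : ℝ} (hc : 0 ≤ c) :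
    c ^ k * c = c ^ (k + 1) := by
  rcases hc.eq_or_lt with h | h
  · rw [← h, Real.zero_rpow hk.ne', Real.zero_rpow (by positivity : k + 1 ≠ 0), zero_mul]
  · rw [Real.rpow_add_one h.ne']

lemma aux_nn_le {k : ℝ} (hk : 0 < k) {a b : ℝ} (hb : 0 ≤ b) (hba : b ≤ a) :
    |a ^ k * a - b ^ k * b| ≤ (k + 1) * ((a ^ k + b ^ k) * |a - b|) := by
  have ha : 0 ≤ a := hb.trans hba
  rw [aux_mul_self hk ha, aux_mul_self hk hb,
    abs_of_nonneg (by exact sub_nonneg.2 (Real.rpow_le_rpow hb hba (by positivity))),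
    abs_of_nonneg (sub_nonneg.2 hba)]
  have h1 := aux_bern hk hb hba
  nlinarith [mul_nonneg (mul_nonneg (by linarith : (0:ℝ) ≤ k + 1)
    (Real.rpow_nonneg hb k)) (sub_nonneg.2 hba)]

lemma aux_nn {k : ℝ} (hk : 0 < k) {a b : ℝ} (ha : 0 ≤ a) (hb : 0 ≤ b) :
    |a ^ k * a - b ^ k * b| ≤ (k + 1) * ((a ^ k + b ^ k) * |a - b|) := by
  rcases le_total b a with h | h
  · exact aux_nn_le hk hb h
  · have h2 := aux_nn_le hk ha h
    rw [abs_sub_comm] at h2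
    rw [abs_sub_comm b a] at h2
    have e : (k + 1) * ((b ^ k + a ^ k) * |a - b|)
        = (k + 1) * ((a ^ k + b ^ k) * |a - b|) := by ring
    linarith [h2, e.ge]

lemma aux_mx {k : ℝ} (hk : 0 < k) {a b : ℝ} (ha : 0 ≤ a) (hb : b ≤ 0) :
    |a ^ k * a - (-b) ^ k * b| ≤ (k + 1) * ((a ^ k + (-b) ^ k) * |a - b|) := by
  have hA : 0 ≤ a ^ k := Real.rpow_nonneg ha k
  have hB : 0 ≤ (-b) ^ k := Real.rpow_nonneg (by linarith) k
  have habs : |a - b| = a - b := abs_of_nonneg (by linarith)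
  have hX : 0 ≤ a ^ k * a - (-b) ^ k * b := by nlinarith
  rw [abs_of_nonneg hX, habs]
  nlinarith [mul_nonneg hA (neg_nonneg.2 hb), mul_nonneg hB ha]

lemma aux_main {k : ℝ} (hk : 0 < k) (a b : ℝ) :
    |(|a| ^ k * a) - (|b| ^ k * b)| ≤ (k + 1) * ((|a| ^ k + |b| ^ k) * |a - b|) := by
  rcases le_total 0 a with ha | ha <;> rcases le_total 0 b with hb | hb
  · rw [abs_of_nonneg ha, abs_of_nonneg hb]; exact aux_nn hk ha hb
  · rw [abs_of_nonneg ha, abs_of_nonpos hb]; exact aux_mx hk ha hb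
  · rw [abs_of_nonpos ha, abs_of_nonneg hb]
    have h := aux_mx hk hb ha
    rw [abs_sub_comm] at h
    rw [abs_sub_comm b a] at h
    have e : (k + 1) * ((b ^ k + (-a) ^ k) * |a - b|)
        = (k + 1) * (((-a) ^ k + b ^ k) * |a - b|) := by ring
    linarith [h, e.le]
  · rw [abs_of_nonpos ha, abs_of_nonpos hb]
    have h := aux_nn hk (neg_nonneg.2 ha) (neg_nonneg.2 hb)
    have h1 : (-a) ^ k * a - (-b) ^ k * b = -((-a) ^ k * (-a) - (-b) ^ k * (-b)) := by ring
    have h2 : -a - -b = -(a - b) := by ring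
    rw [h2, abs_neg] at h
    rw [h1, abs_neg]
    exact h

/-- Bilinear estimate (2.5) of Lemma 2.4, in difference-characterization form:
for `m > 2`, `s ∈ (0,1)`, `p, q, r ∈ (1,∞)` with `1/p = 1/q + 1/r`, there is a
constant `C = C(m) > 0` such that, writing `F = |f|^{m-2} f`,
`∫ ‖F(·+x) - F‖_{L^p}^p / |x|^{2+sp} dx
  ≤ C^p ‖f‖_{L^{r(m-2)}}^{(m-2)p} ∫ ‖f(·+x) - f‖_{L^q}^p / |x|^{2+sp} dx`. -/
theorem stmt_3 (m s p q r : ℝ) (hm : 2 < m) (hs1 : 0 < s) (hs2 : s < 1)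
    (hp : 1 < p) (hq : 1 < q) (hr : 1 < r)
    (hpqr : 1 / p = 1 / q + 1 / r) :
    ∃ C : ℝ, 0 < C ∧
      ∀ f : EuclideanSpace ℝ (Fin 2) → ℝ, Measurable f →
        MemLp f (ENNReal.ofReal q) volume →
        MemLp f (ENNReal.ofReal (r * (m - 2))) volume →
        ∫⁻ x : EuclideanSpace ℝ (Fin 2),
            (eLpNorm (fun y => |f (y + x)| ^ (m - 2) * f (y + x)
                - |f y| ^ (m - 2) * f y) (ENNReal.ofReal p) volume) ^ p /
              ENNReal.ofReal (‖x‖ ^ (2 + s * p)) ≤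
          ENNReal.ofReal C ^ p *
            eLpNorm f (ENNReal.ofReal (r * (m - 2))) volume ^ ((m - 2) * p) *
            ∫⁻ x : EuclideanSpace ℝ (Fin 2),
              (eLpNorm (fun y => f (y + x) - f y) (ENNReal.ofReal q) volume) ^ p /
                ENNReal.ofReal (‖x‖ ^ (2 + s * p)) := by
  have hk0 : 0 < m - 2 := by linarith
  have hp0 : 0 < p := by linarith
  have hq0 : 0 < q := by linarith
  have hr0 : 0 < r := by linarith
  refine ⟨2 * (m - 2 + 1), by linarith, ?_⟩
  intro f hf hfq hfk
  set N := eLpNorm f (ENNReal.ofReal (r * (m - 2))) volume with hN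
  have hNtop : N ≠ ⊤ := hfk.2.ne
  have hPRQ : 1 / (ENNReal.ofReal p) = 1 / (ENNReal.ofReal r) + 1 / (ENNReal.ofReal q) := by
    rw [one_div, one_div, one_div, ← ENNReal.ofReal_inv_of_pos hp0,
      ← ENNReal.ofReal_inv_of_pos hr0, ← ENNReal.ofReal_inv_of_pos hq0,
      ← ENNReal.ofReal_add (by positivity) (by positivity)]
    congr 1
    rw [one_div, one_div, one_div] at hpqr
    linarith
  have hcont : Continuous (fun t : ℝ => t ^ (m - 2)) :=
    continuous_iff_continuousAt.2 fun t => Real.continuousAt_rpow_const t _ (Or.inr hk0.le)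
  have key : ∀ x : EuclideanSpace ℝ (Fin 2),
      eLpNorm (fun y => |f (y + x)| ^ (m - 2) * f (y + x) - |f y| ^ (m - 2) * f y)
        (ENNReal.ofReal p) volume
      ≤ (ENNReal.ofReal (2 * (m - 2 + 1)) * N ^ (m - 2)) *
        eLpNorm (fun y => f (y + x) - f y) (ENNReal.ofReal q) volume := by
    intro x
    have hfT : Measurable fun y : EuclideanSpace ℝ (Fin 2) => f (y + x) :=
      hf.comp (measurable_add_const x)
    set φ : EuclideanSpace ℝ (Fin 2) → ℝ :=
      fun y => (m - 2 + 1) * (|f (y + x)| ^ (m - 2) + |f y| ^ (m - 2)) with hφdef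
    set ψ : EuclideanSpace ℝ (Fin 2) → ℝ := fun y => f (y + x) - f y with hψdef
    have hφm : Measurable φ :=
      measurable_const.mul ((hcont.measurable.comp hfT.abs).add
        (hcont.measurable.comp hf.abs))
    have hψm : Measurable ψ := hfT.sub hf
    have step1 : eLpNorm (fun y => |f (y + x)| ^ (m - 2) * f (y + x) - |f y| ^ (m - 2) * f y)
        (ENNReal.ofReal p) volume ≤ eLpNorm (φ • ψ) (ENNReal.ofReal p) volume := by
      refine eLpNorm_mono fun y => ?_
      have hφy : 0 ≤ (m - 2 + 1) * (|f (y + x)| ^ (m - 2) + |f y| ^ (m - 2)) := by positivity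
      simp only [hφdef, hψdef, Pi.smul_apply', Pi.smul_apply, smul_eq_mul, Real.norm_eq_abs]
      rw [abs_mul, abs_of_nonneg hφy, mul_assoc]
      exact aux_main hk0 (f (y + x)) (f y)
    have step2 : eLpNorm (φ • ψ) (ENNReal.ofReal p) volume ≤
        eLpNorm φ (ENNReal.ofReal r) volume * eLpNorm ψ (ENNReal.ofReal q) volume :=
      eLpNorm_smul_le_mul_eLpNorm hψm.aestronglyMeasurable hφm.aestronglyMeasurable
        (hpqr := ⟨by simpa only [one_div] using hPRQ.symm⟩)
    have habs2 : eLpNorm (fun y => |f y| ^ (m - 2)) (ENNReal.ofReal r) volume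
        = N ^ (m - 2) := by
      have h := eLpNorm_norm_rpow f hk0 (p := ENNReal.ofReal r)
        (μ := (volume : Measure (EuclideanSpace ℝ (Fin 2))))
      simp only [Real.norm_eq_abs] at h
      rw [h, ← ENNReal.ofReal_mul hr0.le]
    have hB : AEStronglyMeasurable (fun y : EuclideanSpace ℝ (Fin 2) => |f y| ^ (m - 2))
        volume := (hcont.measurable.comp hf.abs).aestronglyMeasurable
    have hA : AEStronglyMeasurable (fun y : EuclideanSpace ℝ (Fin 2) => |f (y + x)| ^ (m - 2))
        volume := (hcont.measurable.comp hfT.abs).aestronglyMeasurable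
    have habs1 : eLpNorm (fun y => |f (y + x)| ^ (m - 2)) (ENNReal.ofReal r) volume
        = N ^ (m - 2) := by
      rw [show (fun y : EuclideanSpace ℝ (Fin 2) => |f (y + x)| ^ (m - 2))
          = (fun y => |f y| ^ (m - 2)) ∘ (fun y => y + x) from rfl,
        eLpNorm_comp_measurePreserving hB (measurePreserving_add_right volume x)]
      exact habs2
    have step3 : eLpNorm φ (ENNReal.ofReal r) volume
        ≤ ENNReal.ofReal (2 * (m - 2 + 1)) * N ^ (m - 2) := by
      have hsplit : φ = (m - 2 + 1 : ℝ) •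
          ((fun y : EuclideanSpace ℝ (Fin 2) => |f (y + x)| ^ (m - 2))
            + fun y => |f y| ^ (m - 2)) := rfl
      have htri := eLpNorm_add_le
        (μ := (volume : Measure (EuclideanSpace ℝ (Fin 2))))
        (p := ENNReal.ofReal r) hA hB (ENNReal.one_le_ofReal.2 hr.le)
      rw [habs1, habs2] at htri
      rw [hsplit, eLpNorm_const_smul]
      refine le_trans (mul_le_mul_right htri _) ?_
      rw [Real.enorm_eq_ofReal (by linarith : (0:ℝ) ≤ m - 2 + 1), ← two_mul,
        ENNReal.ofReal_mul (by norm_num : (0:ℝ) ≤ 2),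
        show ENNReal.ofReal (2:ℝ) = 2 from by norm_num]
      exact le_of_eq (by ring)
    calc eLpNorm (fun y => |f (y + x)| ^ (m - 2) * f (y + x) - |f y| ^ (m - 2) * f y)
          (ENNReal.ofReal p) volume
        ≤ eLpNorm (φ • ψ) (ENNReal.ofReal p) volume := step1
      _ ≤ eLpNorm φ (ENNReal.ofReal r) volume * eLpNorm ψ (ENNReal.ofReal q) volume := step2
      _ ≤ (ENNReal.ofReal (2 * (m - 2 + 1)) * N ^ (m - 2)) *
            eLpNorm ψ (ENNReal.ofReal q) volume := mul_le_mul_left step3 _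
  have hfin : ENNReal.ofReal (2 * (m - 2 + 1)) ^ p * N ^ ((m - 2) * p) ≠ ⊤ :=
    ENNReal.mul_ne_top (ENNReal.rpow_ne_top_of_nonneg hp0.le ENNReal.ofReal_ne_top)
      (ENNReal.rpow_ne_top_of_nonneg (by positivity) hNtop)
  calc ∫⁻ x : EuclideanSpace ℝ (Fin 2),
        (eLpNorm (fun y => |f (y + x)| ^ (m - 2) * f (y + x) - |f y| ^ (m - 2) * f y)
          (ENNReal.ofReal p) volume) ^ p / ENNReal.ofReal (‖x‖ ^ (2 + s * p))
      ≤ ∫⁻ x : EuclideanSpace ℝ (Fin 2),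
          (ENNReal.ofReal (2 * (m - 2 + 1)) ^ p * N ^ ((m - 2) * p)) *
            ((eLpNorm (fun y => f (y + x) - f y) (ENNReal.ofReal q) volume) ^ p /
              ENNReal.ofReal (‖x‖ ^ (2 + s * p))) := by
        refine lintegral_mono fun x => ?_
        have h1 := ENNReal.rpow_le_rpow (key x) hp0.le
        rw [ENNReal.mul_rpow_of_nonneg _ _ hp0.le, ENNReal.mul_rpow_of_nonneg _ _ hp0.le,
          ← ENNReal.rpow_mul] at h1
        calc _ ≤ _ := ENNReal.div_le_div_right h1 (ENNReal.ofReal (‖x‖ ^ (2 + s * p)))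
          _ = _ := mul_div_assoc _ _ _
    _ = ENNReal.ofReal (2 * (m - 2 + 1)) ^ p * N ^ ((m - 2) * p) *
          ∫⁻ x : EuclideanSpace ℝ (Fin 2),
            (eLpNorm (fun y => f (y + x) - f y) (ENNReal.ofReal q) volume) ^ p /
              ENNReal.ofReal (‖x‖ ^ (2 + s * p)) := lintegral_const_mul' _ _ hfin
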